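/- (Random target lemma) Let P be an irreducible stochastic matrix on a finite state space V with stationary distribution π. Then there exists a constant κ such that Σ_{j∈V} π_j τ_{i→j} = κ for every i ∈ V, where τ_{i→j} is the mean hitting time from i to j. -/

import Mathlib

open scoped ENNReal Classical

/-- `hitBy P S n i = P(T_S ≤ n | Y_0 = i)` for a Markov chain with transition matrix `P`. -/
noncomputable def hitBy {V : Type*} (P : V → V → ℝ≥0∞) (S : Set V) : ℕ → V → ℝ≥0∞
  | 0, i => if i ∈ S then 1 else 0
  | n + 1, i => if i ∈ S then 1 else ∑' j, P i j * hitBy P S n j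

/-- The mean hitting time `τ_{i→S} = E[T_S | Y_0 = i]`. -/
noncomputable def meanHit {V : Type*} (P : V → V → ℝ≥0∞) (S : Set V) (i : V) : ℝ≥0∞ :=
  ∑' n, (1 - hitBy P S n i)

section
variable {V : Type*} [Fintype V] {P : V → V → ℝ≥0∞} (hst : ∀ i, ∑ j, P i j = 1)
include hst
set_option linter.unusedSectionVars false

lemma P_le_one (i j : V) : P i j ≤ 1 := by
  rw [← hst i]; exact Finset.single_le_sum (fun k _ => zero_le) (Finset.mem_univ j)

lemma P_ne_top (i j : V) : P i j ≠ ∞ := ne_top_of_le_ne_top ENNReal.one_ne_top (P_le_one hst i j)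

lemma hitBy_le_one (S : Set V) : ∀ n i, hitBy P S n i ≤ 1 := by
  intro n
  induction n with
  | zero => intro i; simp only [hitBy]; split <;> simp
  | succ n ih =>
    intro i
    simp only [hitBy]; split
    · exact le_refl _
    · calc ∑' j, P i j * hitBy P S n j ≤ ∑' j, P i j * 1 := by
            exact ENNReal.tsum_le_tsum fun j => mul_le_mul_right (ih j) _
        _ = 1 := by rw [tsum_fintype]; simpa using hst i

lemma hitBy_ne_top (S : Set V) (n : ℕ) (i : V) : hitBy P S n i ≠ ∞ :=
  ne_top_of_le_ne_top ENNReal.one_ne_top (hitBy_le_one hst S n i)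

lemma hitBy_mono (S : Set V) : ∀ n i, hitBy P S n i ≤ hitBy P S (n + 1) i := by
  intro n
  induction n with
  | zero =>
    intro i; simp only [hitBy]; split
    · exact le_refl _
    · exact zero_le
  | succ n ih =>
    intro i; simp only [hitBy]; split
    · exact le_refl _
    · exact ENNReal.tsum_le_tsum fun j => mul_le_mul_right (ih j) _

lemma hitBy_mono' (S : Set V) {m n : ℕ} (h : m ≤ n) (i : V) :
    hitBy P S m i ≤ hitBy P S n i := by
  induction n with
  | zero => simpa [Nat.le_zero.mp h]
  | succ n ih =>
    rcases Nat.lt_or_ge m (n+1) with h' | h'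
    · exact le_trans (ih (Nat.lt_succ_iff.mp h')) (hitBy_mono hst S n i)
    · simpa [Nat.le_antisymm h h']

lemma hitBy_mem {S : Set V} {i : V} (hi : i ∈ S) (n : ℕ) : hitBy P S n i = 1 := by
  cases n <;> simp [hitBy, hi]

/-- survival probability -/
noncomputable def surv (P : V → V → ℝ≥0∞) (S : Set V) (n : ℕ) (i : V) : ℝ≥0∞ :=
  1 - hitBy P S n i

lemma surv_le_one (S : Set V) (n : ℕ) (i : V) : surv P S n i ≤ 1 := tsub_le_self

lemma surv_mem {S : Set V} {i : V} (hi : i ∈ S) (n : ℕ) : surv P S n i = 0 := by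
  simp [surv, hitBy_mem hst hi]

lemma surv_zero {S : Set V} {i : V} (hi : i ∉ S) : surv P S 0 i = 1 := by
  simp [surv, hitBy, hi]

lemma surv_succ {S : Set V} {i : V} (hi : i ∉ S) (n : ℕ) :
    surv P S (n + 1) i = ∑ j, P i j * surv P S n j := by
  have key : hitBy P S (n+1) i + ∑ j, P i j * surv P S n j = 1 := by
    have : ∀ j, P i j * hitBy P S n j + P i j * surv P S n j = P i j := by
      intro j
      rw [← mul_add, surv, add_tsub_cancel_of_le (hitBy_le_one hst S n j), mul_one]
    simp only [hitBy, if_neg hi, tsum_fintype]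
    rw [← Finset.sum_add_distrib]
    simp only [this]; exact hst i
  rw [surv, ← key, ENNReal.add_sub_cancel_left (hitBy_ne_top hst S (n+1) i)]

lemma surv_anti (S : Set V) {m n : ℕ} (h : m ≤ n) (i : V) : surv P S n i ≤ surv P S m i :=
  tsub_le_tsub_left (hitBy_mono' hst S h i) 1

end

section
variable {V : Type*} [Fintype V] {P : V → V → ℝ≥0∞} (hst : ∀ i, ∑ j, P i j = 1)
include hst
set_option linter.unusedSectionVars false

lemma hitBy_pos_of_path {b i : V} (h : Relation.ReflTransGen (fun a c => 0 < P a c) i b) :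
    ∃ n, 0 < hitBy P {b} n i := by
  induction h using Relation.ReflTransGen.head_induction_on with
  | refl => exact ⟨0, by simp [hitBy]⟩
  | head hac _ ih =>
    rename_i a c _
    obtain ⟨n, hn⟩ := ih
    refine ⟨n + 1, ?_⟩
    by_cases ha : a ∈ ({b} : Set V)
    · simp [hitBy, ha]
    · simp only [hitBy, if_neg ha]
      calc (0:ℝ≥0∞) < P a c * hitBy P {b} n c := ENNReal.mul_pos hac.ne' hn.ne'
        _ ≤ ∑' j, P a j * hitBy P {b} n j := ENNReal.le_tsum c

/-- a uniform time `N ≥ 1` and bound `a < 1` such that the survival prob at time `N`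
is at most `a`, for every start `i` and target `b`. -/
lemma exists_unif_bound (hirr : ∀ i j : V, Relation.ReflTransGen (fun a b => 0 < P a b) i j)
    [Nonempty V] :
    ∃ N : ℕ, ∃ a : ℝ≥0∞, 0 < N ∧ a < 1 ∧ ∀ b i : V, surv P {b} N i ≤ a := by
  have hex : ∀ p : V × V, ∃ n, 0 < hitBy P {p.2} n p.1 := fun p => hitBy_pos_of_path hst (hirr p.1 p.2)
  choose nf hnf using hex
  set N : ℕ := max 1 (Finset.univ.sup nf) with hN
  have hNpos : 0 < N := lt_of_lt_of_le one_pos (le_max_left _ _)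
  have hpos : ∀ b i : V, 0 < hitBy P {b} N i := by
    intro b i
    refine lt_of_lt_of_le (hnf (i, b)) (hitBy_mono' hst _ ?_ _)
    exact le_trans (Finset.le_sup (Finset.mem_univ (i,b))) (le_max_right _ _)
  set a : ℝ≥0∞ := Finset.univ.sup (fun p : V × V => surv P {p.2} N p.1) with ha
  refine ⟨N, a, hNpos, ?_, fun b i => Finset.le_sup (f := fun p : V × V => surv P {p.2} N p.1) (Finset.mem_univ (i, b))⟩
  have : ∀ p : V × V, surv P {p.2} N p.1 < 1 := by
    intro p
    have h1 := hitBy_le_one hst {p.2} N p.1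
    have := hpos p.2 p.1
    rw [surv]
    exact ENNReal.sub_lt_self ENNReal.one_ne_top one_ne_zero (hpos p.2 p.1).ne'
  exact (Finset.sup_lt_iff (by norm_num)).mpr (fun p _ => this p)

lemma surv_submul (S : Set V) (m : ℕ) (M : ℝ≥0∞) (hM : ∀ k, surv P S m k ≤ M) :
    ∀ N i, surv P S (m + N) i ≤ surv P S N i * M := by
  intro N
  induction N with
  | zero =>
    intro i
    by_cases hi : i ∈ S
    · simp [surv_mem hst hi]
    · rw [surv_zero hst hi, one_mul]; exact hM i
  | succ N ih =>
    intro i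
    by_cases hi : i ∈ S
    · simp [surv_mem hst hi]
    · rw [← Nat.add_assoc, surv_succ hst hi, surv_succ hst hi, Finset.sum_mul]
      exact Finset.sum_le_sum fun j _ => by rw [mul_assoc]; exact mul_le_mul_right (ih j) _

lemma surv_geom {N : ℕ} {a : ℝ≥0∞} (b : V) (hb : ∀ i, surv P {b} N i ≤ a) :
    ∀ k i, surv P {b} (k * N) i ≤ a ^ k := by
  intro k
  induction k with
  | zero => intro i; simpa using surv_le_one hst {b} 0 i
  | succ k ih =>
    intro i
    have := surv_submul hst {b} (k * N) (a ^ k) ih N i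
    calc surv P {b} ((k+1) * N) i = surv P {b} (k * N + N) i := by ring_nf
      _ ≤ surv P {b} N i * a ^ k := this
      _ ≤ a * a ^ k := mul_le_mul_left (hb i) _
      _ = a ^ (k+1) := by ring

lemma meanHit_ne_top {N : ℕ} {a : ℝ≥0∞} (hNpos : 0 < N) (ha : a < 1) (b : V)
    (hb : ∀ i, surv P {b} N i ≤ a) (i : V) : meanHit P {b} i ≠ ∞ := by
  have hNe : NeZero N := ⟨hNpos.ne'⟩
  have key : ∀ n : ℕ, surv P {b} n i ≤ a ^ (n / N) := by
    intro n
    calc surv P {b} n i ≤ surv P {b} ((n / N) * N) i :=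
          surv_anti hst {b} (Nat.div_mul_le_self n N) i
      _ ≤ a ^ (n / N) := surv_geom hst b hb _ i
  have : meanHit P {b} i ≤ ∑' n : ℕ, a ^ (n / N) := ENNReal.tsum_le_tsum key
  refine ne_top_of_le_ne_top ?_ this
  have : ∑' n : ℕ, a ^ (n / N) = ∑' p : ℕ × Fin N, a ^ (((Nat.divModEquiv N).symm p : ℕ) / N) :=
    ((Nat.divModEquiv N).symm.tsum_eq _).symm
  rw [this]
  have heval : ∀ p : ℕ × Fin N, ((Nat.divModEquiv N).symm p : ℕ) / N = p.1 := by
    intro p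
    simp only [Nat.divModEquiv, Equiv.coe_fn_symm_mk]
    rw [mul_comm, Nat.mul_add_div hNpos, Nat.div_eq_of_lt p.2.2, add_zero]
  calc ∑' p : ℕ × Fin N, a ^ (((Nat.divModEquiv N).symm p : ℕ) / N)
      = ∑' p : ℕ × Fin N, a ^ p.1 := by exact tsum_congr fun p => by rw [heval p]
    _ = ∑' k : ℕ, ∑' r : Fin N, a ^ k := ENNReal.tsum_prod (f := fun k (_ : Fin N) => a ^ k)
    _ = ∑' k : ℕ, (N : ℝ≥0∞) * a ^ k := by
        refine tsum_congr fun k => ?_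
        rw [tsum_fintype]; simp [Finset.sum_const, nsmul_eq_mul]
    _ = (N : ℝ≥0∞) * (1 - a)⁻¹ := by rw [ENNReal.tsum_mul_left, ENNReal.tsum_geometric]
    _ ≠ ∞ := by
        apply ENNReal.mul_ne_top (by simp)
        simp [ENNReal.inv_ne_top, tsub_eq_zero_iff_le, not_le, ha]
end

section
variable {V : Type*} [Fintype V] {P : V → V → ℝ≥0∞} (hst : ∀ i, ∑ j, P i j = 1)
include hst
set_option linter.unusedSectionVars false

lemma meanHit_mem {S : Set V} {i : V} (hi : i ∈ S) : meanHit P S i = 0 := by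
  simp only [meanHit]
  refine ENNReal.tsum_eq_zero.mpr fun n => ?_
  have := surv_mem hst hi n
  simpa [surv] using this

lemma meanHit_succ {S : Set V} {i : V} (hi : i ∉ S) :
    meanHit P S i = 1 + ∑ j, P i j * meanHit P S j := by
  have h0 : meanHit P S i = ∑' n, surv P S n i := rfl
  rw [h0, tsum_eq_zero_add' (f := fun n => surv P S n i) ENNReal.summable, surv_zero hst hi]
  congr 1
  calc ∑' n, surv P S (n + 1) i = ∑' n, ∑ j, P i j * surv P S n j := by
        exact tsum_congr fun n => surv_succ hst hi n
    _ = ∑ j, ∑' n, P i j * surv P S n j :=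
        Summable.tsum_finsetSum fun j _ => ENNReal.summable
    _ = ∑ j, P i j * meanHit P S j := by
        exact Finset.sum_congr rfl fun j _ => ENNReal.tsum_mul_left

end

/-- **Random target lemma.** For an irreducible stochastic matrix `P` on a finite state
space with stationary distribution `π`, the quantity `∑_j π_j τ_{i→j}` does not depend
on `i`. -/
theorem random_target_lemma {V : Type*} [Fintype V]
    (P : V → V → ℝ≥0∞) (hst : ∀ i, ∑ j, P i j = 1)
    (hirr : ∀ i j : V, Relation.ReflTransGen (fun a b => 0 < P a b) i j)
    (π : V → ℝ≥0∞) (hπpos : ∀ i, 0 < π i) (hπsum : ∑ i, π i = 1)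
    (hπstat : ∀ j, ∑ i, π i * P i j = π j) :
    ∃ κ : ℝ≥0∞, ∀ i : V, ∑ j, π j * meanHit P {j} i = κ := by
  have hVne : Nonempty V := by
    by_contra h
    rw [not_nonempty_iff] at h
    simp [Finset.univ_eq_empty] at hπsum
  obtain ⟨N, a, hN, ha, hbnd⟩ := exists_unif_bound hst hirr
  have hfin : ∀ b i : V, meanHit P {b} i ≠ ∞ := fun b i =>
    meanHit_ne_top hst hN ha b (hbnd b) i
  have hπtop : ∀ i, π i ≠ ∞ := by
    intro i
    refine ne_top_of_le_ne_top ENNReal.one_ne_top ?_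
    rw [← hπsum]
    exact Finset.single_le_sum (fun k _ => zero_le) (Finset.mem_univ i)
  -- real-valued versions
  set p : V → V → ℝ := fun i j => (P i j).toReal with hp
  set q : V → ℝ := fun i => (π i).toReal with hq
  set F : V → V → ℝ := fun b i => (meanHit P {b} i).toReal with hF
  have hp0 : ∀ i j, 0 ≤ p i j := fun i j => ENNReal.toReal_nonneg
  have hF0 : ∀ b i, 0 ≤ F b i := fun b i => ENNReal.toReal_nonneg
  have hpsum : ∀ i, ∑ j, p i j = 1 := by
    intro i
    have h : (∑ j, P i j).toReal = (1:ℝ≥0∞).toReal := by rw [hst i]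
    rw [ENNReal.toReal_sum (fun j _ => P_ne_top hst i j), ENNReal.toReal_one] at h
    exact h
  have hq0 : ∀ i, 0 < q i := fun i => ENNReal.toReal_pos (hπpos i).ne' (hπtop i)
  have hqsum : ∑ i, q i = 1 := by
    have h : (∑ i, π i).toReal = (1:ℝ≥0∞).toReal := by rw [hπsum]
    rw [ENNReal.toReal_sum (fun i _ => hπtop i), ENNReal.toReal_one] at h
    exact h
  have hqstat : ∀ j, ∑ i, q i * p i j = q j := by
    intro j
    have h : (∑ i, π i * P i j).toReal = (π j).toReal := by rw [hπstat j]
    rw [ENNReal.toReal_sum (fun i _ => ENNReal.mul_ne_top (hπtop i) (P_ne_top hst i j))] at h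
    simp only [ENNReal.toReal_mul] at h
    exact h
  have hFb : ∀ b : V, F b b = 0 := by
    intro b; rw [hF]; simp [meanHit_mem hst (Set.mem_singleton b)]
  have hFrec : ∀ b i : V, i ≠ b → F b i = 1 + ∑ k, p i k * F b k := by
    intro b i hib
    have h1 := meanHit_succ hst (S := {b}) (i := i) (by simpa using hib)
    have hterm : ∀ k, P i k * meanHit P {b} k ≠ ∞ := fun k =>
      ENNReal.mul_ne_top (P_ne_top hst i k) (hfin b k)
    have hsum : (∑ k, P i k * meanHit P {b} k) ≠ ∞ :=
      (ENNReal.sum_lt_top.mpr (fun k _ => (hterm k).lt_top)).ne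
    calc F b i = (1 + ∑ k, P i k * meanHit P {b} k).toReal := by
          rw [show F b i = (meanHit P {b} i).toReal from rfl, h1]
      _ = 1 + ∑ k, p i k * F b k := by
          rw [ENNReal.toReal_add ENNReal.one_ne_top hsum, ENNReal.toReal_one,
            ENNReal.toReal_sum (fun k _ => hterm k)]
          congr 1
          exact Finset.sum_congr rfl fun k _ => ENNReal.toReal_mul
  -- Kac's formula
  have kac : ∀ b : V, q b * (1 + ∑ k, p b k * F b k) = 1 := by
    intro b
    set A : ℝ := ∑ i, q i * F b i with hA
    have fubini : ∑ i, q i * ∑ k, p i k * F b k = A := by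
      calc ∑ i, q i * ∑ k, p i k * F b k
          = ∑ i, ∑ k, q i * p i k * F b k := by
            exact Finset.sum_congr rfl fun i _ => by rw [Finset.mul_sum]; exact Finset.sum_congr rfl fun k _ => by ring
        _ = ∑ k, ∑ i, q i * p i k * F b k := Finset.sum_comm
        _ = ∑ k, (∑ i, q i * p i k) * F b k := by
            exact Finset.sum_congr rfl fun k _ => (Finset.sum_mul _ _ _).symm
        _ = A := by rw [hA]; exact Finset.sum_congr rfl fun k _ => by rw [hqstat k]
    have expand : A = ∑ i ∈ Finset.univ.erase b, q i * (1 + ∑ k, p i k * F b k) := by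
      rw [hA, ← Finset.add_sum_erase _ _ (Finset.mem_univ b), hFb b, mul_zero, zero_add]
      exact Finset.sum_congr rfl fun i hi => by
        rw [hFrec b i (Finset.ne_of_mem_erase hi)]
    have h2 : A = (1 - q b) + (A - q b * ∑ k, p b k * F b k) := by
      have e1 : ∑ i ∈ Finset.univ.erase b, q i * (1 + ∑ k, p i k * F b k)
          = ∑ i ∈ Finset.univ.erase b, q i + ∑ i ∈ Finset.univ.erase b, q i * ∑ k, p i k * F b k := by
        rw [← Finset.sum_add_distrib]
        exact Finset.sum_congr rfl fun i _ => by ring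
      have e2 : ∑ i ∈ Finset.univ.erase b, q i = 1 - q b := by
        rw [← hqsum, ← Finset.add_sum_erase _ _ (Finset.mem_univ b)]; ring
      have e3 : ∑ i ∈ Finset.univ.erase b, q i * ∑ k, p i k * F b k
          = A - q b * ∑ k, p b k * F b k := by
        rw [← fubini, ← Finset.add_sum_erase _ _ (Finset.mem_univ b)]; ring
      conv_lhs => rw [expand, e1, e2, e3]
    nlinarith [h2]
  -- the target function H is harmonic
  set H : V → ℝ := fun i => ∑ b, q b * F b i with hH
  have harm : ∀ i, H i = ∑ k, p i k * H k := by
    intro i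
    have fubini : ∑ b, q b * ∑ k, p i k * F b k = ∑ k, p i k * H k := by
      calc ∑ b, q b * ∑ k, p i k * F b k
          = ∑ b, ∑ k, p i k * (q b * F b k) := by
            exact Finset.sum_congr rfl fun b _ => by rw [Finset.mul_sum]; exact Finset.sum_congr rfl fun k _ => by ring
        _ = ∑ k, ∑ b, p i k * (q b * F b k) := Finset.sum_comm
        _ = ∑ k, p i k * H k :=
            Finset.sum_congr rfl fun k _ => (Finset.mul_sum _ _ _).symm
    have kaci : q i * ∑ k, p i k * F i k = 1 - q i := by
      have := kac i; nlinarith [this]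
    have expand : H i = ∑ b ∈ Finset.univ.erase i, q b * (1 + ∑ k, p i k * F b k) := by
      rw [show H i = ∑ b, q b * F b i from rfl,
        ← Finset.add_sum_erase _ _ (Finset.mem_univ i), hFb i, mul_zero, zero_add]
      exact Finset.sum_congr rfl fun b hb => by
        rw [hFrec b i (Finset.ne_of_mem_erase hb).symm]
    have e1 : ∑ b ∈ Finset.univ.erase i, q b * (1 + ∑ k, p i k * F b k)
        = ∑ b ∈ Finset.univ.erase i, q b + ∑ b ∈ Finset.univ.erase i, q b * ∑ k, p i k * F b k := by
      rw [← Finset.sum_add_distrib]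
      exact Finset.sum_congr rfl fun b _ => by ring
    have e2 : ∑ b ∈ Finset.univ.erase i, q b = 1 - q i := by
      rw [← hqsum, ← Finset.add_sum_erase _ _ (Finset.mem_univ i)]; ring
    have e3 : ∑ b ∈ Finset.univ.erase i, q b * ∑ k, p i k * F b k
        = ∑ k, p i k * H k - q i * ∑ k, p i k * F i k := by
      rw [← fubini, ← Finset.add_sum_erase _ _ (Finset.mem_univ i)]; ring
    rw [expand, e1, e2, e3, kaci]; ring
  -- harmonic functions are constant
  obtain ⟨i0, -, hmin⟩ := Finset.exists_min_image Finset.univ H Finset.univ_nonempty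
  have hmin' : ∀ k, H i0 ≤ H k := fun k => hmin k (Finset.mem_univ k)
  have step : ∀ c d : V, H c = H i0 → 0 < P c d → H d = H i0 := by
    intro c d hc hcd
    have hzero : ∑ k, p c k * (H k - H i0) = 0 := by
      have : ∑ k, p c k * (H k - H i0) = (∑ k, p c k * H k) - (∑ k, p c k) * H i0 := by
        rw [Finset.sum_mul, ← Finset.sum_sub_distrib]
        exact Finset.sum_congr rfl fun k _ => by ring
      rw [this, hpsum c, one_mul, ← harm c, hc]; ring
    have hnn : ∀ k ∈ Finset.univ, (0:ℝ) ≤ p c k * (H k - H i0) := fun k _ =>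
      mul_nonneg (hp0 c k) (by linarith [hmin' k])
    have hterm := (Finset.sum_eq_zero_iff_of_nonneg hnn).mp hzero d (Finset.mem_univ d)
    have hpcd : 0 < p c d := ENNReal.toReal_pos hcd.ne' (P_ne_top hst c d)
    have : H d - H i0 = 0 := by
      rcases mul_eq_zero.mp hterm with h | h
      · exact absurd h hpcd.ne'
      · exact h
    linarith
  have hconst : ∀ j, H j = H i0 := by
    intro j
    induction hirr i0 j with
    | refl => rfl
    | tail _ hcd ih => exact step _ _ ih hcd
  -- conclude
  refine ⟨∑ j, π j * meanHit P {j} i0, fun i => ?_⟩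
  have hfin1 : (∑ j, π j * meanHit P {j} i) ≠ ∞ :=
    (ENNReal.sum_lt_top.mpr fun j _ => (ENNReal.mul_ne_top (hπtop j) (hfin j i)).lt_top).ne
  have hfin2 : (∑ j, π j * meanHit P {j} i0) ≠ ∞ :=
    (ENNReal.sum_lt_top.mpr fun j _ => (ENNReal.mul_ne_top (hπtop j) (hfin j i0)).lt_top).ne
  refine (ENNReal.toReal_eq_toReal_iff' hfin1 hfin2).mp ?_
  have key : ∀ i : V, (∑ j, π j * meanHit P {j} i).toReal = H i := by
    intro i
    rw [ENNReal.toReal_sum (fun j _ => ENNReal.mul_ne_top (hπtop j) (hfin j i))]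
    exact Finset.sum_congr rfl fun j _ => ENNReal.toReal_mul
  rw [key i, key i0, hconst i]
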